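/- Let A be an n×p real matrix, Z a p×d real matrix with Zᵀ Z = I_d, and b ∈ ℝⁿ. If x̂ ∈ ℝ^d minimizes the function x ↦ ‖A Z x − b‖₂² over ℝ^d, then the vector Z x̂ ∈ ℝ^p minimizes the function y ↦ ‖A (Z Zᵀ) y − b‖₂² over ℝ^p. -/
import Mathlib


open Matrix

/-- **Lemma 1 (rotate or project), minimizer form.**
Let `A` be `n × p`, `Z` be `p × d` with orthonormal columns (`Zᵀ Z = 1`), and
`b ∈ ℝⁿ`.  If `x̂` minimizes `x ↦ ‖A Z x − b‖₂²` over `ℝ^d`, then `Z x̂`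
minimizes `y ↦ ‖A (Z Zᵀ) y − b‖₂²` over `ℝ^p`. -/
theorem suffpcr_lemma1_minimizer (n p d : ℕ)
    (A : Matrix (Fin n) (Fin p) ℝ) (Z : Matrix (Fin p) (Fin d) ℝ)
    (hZ : Zᵀ * Z = 1) (b : Fin n → ℝ) (xhat : Fin d → ℝ)
    (hxhat : ∀ x : Fin d → ℝ,
      ∑ i, ((A * Z).mulVec xhat i - b i) ^ 2 ≤ ∑ i, ((A * Z).mulVec x i - b i) ^ 2) :
    ∀ y : Fin p → ℝ,
      ∑ i, ((A * (Z * Zᵀ)).mulVec (Z.mulVec xhat) i - b i) ^ 2 ≤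
        ∑ i, ((A * (Z * Zᵀ)).mulVec y i - b i) ^ 2 := by
  intro y
  have key : ∀ v : Fin p → ℝ,
      (A * (Z * Zᵀ)).mulVec v = (A * Z).mulVec (Zᵀ.mulVec v) := by
    intro v
    rw [show A * (Z * Zᵀ) = (A * Z) * Zᵀ by rw [Matrix.mul_assoc], Matrix.mulVec_mulVec]
  rw [key, key, show Zᵀ.mulVec (Z.mulVec xhat) = xhat by
    rw [Matrix.mulVec_mulVec, hZ, Matrix.one_mulVec]]
  exact hxhat (Zᵀ.mulVec y)
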